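/- arXiv:math/0611421 — 2 statements merged into one kernel-verified Lean document; each statement's English description precedes it below -/
import Mathlib

section
/- For every integer n ≥ 3, the codimension h(n) = C(2n, n) - C(2n, n-2) - 1 - n(n+1)/2 of the first canonical embedding of Sp(n)/U(n) is not equal to n(n+1)/2 and not equal to n(n-1)/2. -/
lemma aux_key : ∀ m : ℕ, Nat.choose (2*m+6) (m+1) + ((m+3)*(m+4)+2) ≤ Nat.choose (2*m+6) (m+3) := by
  intro m
  induction m with
  | zero => decide
  | succ m ih =>
    have pascal0 : ∀ N k : ℕ, Nat.choose (N+2) (k+2)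
        = Nat.choose N (k+2) + 2 * Nat.choose N (k+1) + Nat.choose N k := by
      intro N k
      rw [show N+2 = N+1+1 from rfl, Nat.choose_succ_succ (N+1) (k+1),
        Nat.choose_succ_succ N k, Nat.choose_succ_succ N (k+1)]
      ring
    have pascal : ∀ k, Nat.choose (2*(m+1)+6) (k+2)
        = Nat.choose (2*m+6) (k+2) + 2 * Nat.choose (2*m+6) (k+1) + Nat.choose (2*m+6) k := by
      intro k
      rw [show 2*(m+1)+6 = (2*m+6)+2 from by ring, pascal0]
    have e2 : m + 2 = m + 0 + 2 := by ring
    have e4 : m + 4 = m + 2 + 2 := by ring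
    have g1 := pascal m
    have g2 := pascal (m+2)
    have hmono1 : Nat.choose (2*m+6) m ≤ Nat.choose (2*m+6) (m+1) :=
      Nat.choose_le_succ_of_lt_half_left (by omega)
    have hmono2 : Nat.choose (2*m+6) (m+1) ≤ Nat.choose (2*m+6) (m+2) :=
      Nat.choose_le_succ_of_lt_half_left (by omega)
    have hsymm : Nat.choose (2*m+6) (m+4) = Nat.choose (2*m+6) (m+2) := by
      have h : 2*m+6 - (m+4) = m+2 := by omega
      rw [← h, Nat.choose_symm (by omega)]
    rw [show m+1+1 = m+2 from rfl, show m+1+3 = m+4 from rfl,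
        show m+2 = m+0+2 from by ring] at *
    rw [g1]
    rw [show m+4 = m+0+2+2 from by ring] at g2 ⊢
    rw [g2]
    nlinarith [ih, hmono1, hmono2, hsymm]

theorem stmt_1 (n : ℕ) (hn : 3 ≤ n) :
    ((Nat.choose (2 * n) n : ℤ) - Nat.choose (2 * n) (n - 2) - 1 - n * (n + 1) / 2
        ≠ n * (n + 1) / 2) ∧
    ((Nat.choose (2 * n) n : ℤ) - Nat.choose (2 * n) (n - 2) - 1 - n * (n + 1) / 2
        ≠ n * (n - 1) / 2) := by
  obtain ⟨m, rfl⟩ : ∃ m, n = m + 3 := ⟨n - 3, by omega⟩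
  have key := aux_key m
  have e1 : 2 * (m+3) = 2*m+6 := by ring
  have e2 : m + 3 - 2 = m + 1 := by omega
  rw [e1, e2]
  obtain ⟨k, hk⟩ : ∃ k, (m+3)*(m+4) = 2*k := by
    rcases Nat.even_or_odd m with ⟨r, hr⟩ | ⟨r, hr⟩
    · exact ⟨(r+r+3)*(r+2), by subst hr; ring⟩
    · exact ⟨(r+2)*(2*r+5), by subst hr; ring⟩
  obtain ⟨j, hj⟩ : ∃ j, (m+3)*(m+2) = 2*j := by
    rcases Nat.even_or_odd m with ⟨r, hr⟩ | ⟨r, hr⟩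
    · exact ⟨(r+r+3)*(r+1), by subst hr; ring⟩
    · exact ⟨(r+2)*(2*r+3), by subst hr; ring⟩
  have hk' : ((m:ℤ)+3)*((m:ℤ)+3+1) = 2*k := by push_cast; linarith [hk]
  have hj' : ((m:ℤ)+3)*((m:ℤ)+3-1) = 2*j := by push_cast; linarith [hj]
  have key' : (Nat.choose (2*m+6) (m+1) : ℤ) + (2*k+2) ≤ Nat.choose (2*m+6) (m+3) := by
    push_cast
    have := (Nat.cast_le (α := ℤ)).mpr key
    push_cast at this
    linarith
  have hjk : (j:ℤ) ≤ k := by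
    have : 2*j ≤ 2*k := by rw [← hk, ← hj]; nlinarith
    exact_mod_cast by omega
  push_cast
  rw [hk', hj']
  constructor <;> intro h <;> omega
end

section
/- For all integers a, b with 3 ≤ a ≤ b, the quantity C(a+b, b) - ab - 1 is not equal to any of: a(a+1)/2, a(a-1)/2, b(b+1)/2, b(b-1)/2, or ab. -/
lemma choose3_eq (b : ℕ) : (b + 3).choose 3 * 6 = (b + 1) * (b + 2) * (b + 3) := by
  have h2 : (b + 2).choose 2 * 2 = (b + 2) * (b + 1) := by
    have := Nat.add_one_mul_choose_eq (b + 1) 1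
    simpa [Nat.choose_one_right] using this.symm
  have h3 : (b + 3).choose 3 * 3 = (b + 3) * ((b + 2).choose 2) := by
    have := Nat.add_one_mul_choose_eq (b + 2) 2
    simpa using this.symm
  calc (b + 3).choose 3 * 6 = ((b + 3).choose 3 * 3) * 2 := by ring
    _ = (b + 3) * ((b + 2).choose 2 * 2) := by rw [h3]; ring
    _ = (b + 3) * ((b + 2) * (b + 1)) := by rw [h2]
    _ = (b + 1) * (b + 2) * (b + 3) := by ring

lemma choose_lb (b : ℕ) (hb : 3 ≤ b) : 2 * b ^ 2 + 2 ≤ (b + 3).choose b := by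
  have hsymm : (b + 3).choose b = (b + 3).choose 3 := by
    have := Nat.choose_symm (n := b + 3) (k := 3) (by omega)
    simpa using this
  rw [hsymm]
  have h6 : (2 * b ^ 2 + 2) * 6 ≤ (b + 3).choose 3 * 6 := by
    rw [choose3_eq]
    nlinarith [hb, Nat.mul_le_mul_right (b * b) hb]
  omega

theorem stmt_3 (a b : ℕ) (ha : 3 ≤ a) (hab : a ≤ b) :
    ((Nat.choose (a + b) b : ℤ) - a * b - 1 ≠ a * (a + 1) / 2) ∧
    ((Nat.choose (a + b) b : ℤ) - a * b - 1 ≠ a * (a - 1) / 2) ∧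
    ((Nat.choose (a + b) b : ℤ) - a * b - 1 ≠ b * (b + 1) / 2) ∧
    ((Nat.choose (a + b) b : ℤ) - a * b - 1 ≠ b * (b - 1) / 2) ∧
    ((Nat.choose (a + b) b : ℤ) - a * b - 1 ≠ a * b) := by
  have hb : 3 ≤ b := le_trans ha hab
  have hmono : (b + 3).choose b ≤ (a + b).choose b :=
    Nat.choose_le_choose b (by omega)
  have hlb : 2 * b ^ 2 + 2 ≤ (a + b).choose b := le_trans (choose_lb b hb) hmono
  have hlbZ : (2 * (b : ℤ) ^ 2 + 2) ≤ ((a + b).choose b : ℤ) := by exact_mod_cast hlb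
  have habZ : (a : ℤ) * b ≤ (b : ℤ) * b := by
    have : (a : ℤ) ≤ b := by exact_mod_cast hab
    nlinarith [Int.ofNat_nonneg b]
  -- LHS strictly above b^2
  have hLHS : (b : ℤ) * b < ((a + b).choose b : ℤ) - a * b - 1 := by nlinarith
  -- Each RHS is at most b*b
  have hbpos : (0 : ℤ) ≤ b := Int.ofNat_nonneg b
  have haZ : (3 : ℤ) ≤ a := by exact_mod_cast ha
  have habZ' : (a : ℤ) ≤ b := by exact_mod_cast hab
  have hdiv : ∀ x : ℤ, x ≤ 2 * (b * b) → x / 2 ≤ b * b := by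
    intro x hx
    have := Int.ediv_le_ediv (by norm_num : (0:ℤ) < 2) hx
    simpa [Int.mul_ediv_cancel_left] using this
  have r1 : (a : ℤ) * (a + 1) / 2 ≤ b * b := hdiv _ (by nlinarith)
  have r2 : (a : ℤ) * (a - 1) / 2 ≤ b * b := hdiv _ (by nlinarith)
  have r3 : (b : ℤ) * (b + 1) / 2 ≤ b * b := hdiv _ (by nlinarith)
  have r4 : (b : ℤ) * (b - 1) / 2 ≤ b * b := hdiv _ (by nlinarith)
  have r5 : (a : ℤ) * b ≤ b * b := habZ
  refine ⟨?_, ?_, ?_, ?_, ?_⟩ <;> intro h <;> linarith [hLHS]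
end
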